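/- For the abelian Lie algebra V = ℝ^n with prolongation spaces g_k = Ker(q : S^{k+1}V* ⊗ V → S^k V*) where q is the contraction, the bracket of g_{-1} = V with g_{k+1}' maps onto g_k', i.e. [g_{-1}, g_{k+1}'] = g_k' for all k ≥ 0; in particular [g_{-1}, g_1'] = sl(V) ⊂ g_0. -/

import Mathlib

open MvPolynomial



section Aux
variable {σ : Type*} {R : Type*} [CommRing R]

lemma pderiv_comm' (i j : σ) (p : MvPolynomial σ R) :
    pderiv i (pderiv j p) = pderiv j (pderiv i p) := by
  classical
  induction p using MvPolynomial.induction_on with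
  | C a => simp
  | add p q hp hq => simp [hp, hq]
  | mul_X p s hp =>
    have hX : ∀ t u : σ, pderiv t (pderiv u (X s) : MvPolynomial σ R) = 0 := by
      intro t u
      by_cases h : s = u
      · subst h; simp
      · rw [pderiv_X_of_ne h]; simp
    simp only [pderiv_mul, map_add, pderiv_mul, hX, hp, mul_zero, add_zero]
    ring

lemma degree_sub_single {m : σ →₀ ℕ} {i : σ} {d : ℕ} (hd : m.degree = d + 1)
    (hi : m i ≠ 0) : (m - Finsupp.single i 1).degree = d := by
  classical
  have hle : Finsupp.single i 1 ≤ m := Finsupp.single_le_iff.mpr (Nat.one_le_iff_ne_zero.mpr hi)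
  have h1 : (m - Finsupp.single i 1) + Finsupp.single i 1 = m := tsub_add_cancel_of_le hle
  have hadd : ((m - Finsupp.single i 1) + Finsupp.single i 1).degree
      = (m - Finsupp.single i 1).degree + (Finsupp.single i 1).degree := by
    simp [Finsupp.degree_eq_weight_one, map_add]
  have hsingle : (Finsupp.single i 1 : σ →₀ ℕ).degree = 1 := by
    rw [Finsupp.degree_apply, Finsupp.support_single_ne_zero _ one_ne_zero, Finset.sum_singleton,
      Finsupp.single_eq_same]
  rw [h1, hsingle] at hadd
  omega

lemma isHomogeneous_pderiv {p : MvPolynomial σ R} {d : ℕ}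
    (hp : p.IsHomogeneous (d + 1)) (i : σ) : (pderiv i p).IsHomogeneous d := by
  classical
  conv_lhs => rw [p.as_sum]
  rw [map_sum]
  apply IsHomogeneous.sum
  intro m hm
  rw [pderiv_monomial]
  by_cases h : m i = 0
  · simp [h, isHomogeneous_zero]
  · apply isHomogeneous_monomial
    have hdeg : m.degree = d + 1 := by
      by_contra hne
      exact (MvPolynomial.mem_support_iff.mp hm) (hp.coeff_eq_zero hne)
    exact degree_sub_single hdeg h

end Aux

lemma euler_identity {n d : ℕ} {p : MvPolynomial (Fin n) ℝ} (hp : p.IsHomogeneous d) :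
    ∑ j, X j * (pderiv j p : MvPolynomial (Fin n) ℝ) = (d : ℝ) • p := by
  classical
  have key : ∀ (m : Fin n →₀ ℕ) (a : ℝ), m.degree = d →
      ∑ j, X j * (pderiv j (monomial m a) : MvPolynomial (Fin n) ℝ) = (d : ℝ) • monomial m a := by
    intro m a hm
    have h1 : ∀ j : Fin n, X j * (pderiv j (monomial m a) : MvPolynomial (Fin n) ℝ)
        = monomial m (a * m j) := by
      intro j
      rw [pderiv_monomial]
      by_cases h : m j = 0
      · simp [h]
      · rw [X, monomial_mul, one_mul, add_comm, tsub_add_cancel_of_le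
          (Finsupp.single_le_iff.mpr (Nat.one_le_iff_ne_zero.mpr h))]
    simp_rw [h1]
    rw [← map_sum, ← Finset.mul_sum]
    have hs : (∑ j : Fin n, ((m j : ℕ) : ℝ)) = (d : ℝ) := by
      have : ∑ j : Fin n, m j = m.degree := by
        rw [Finsupp.degree_apply]
        exact (Finset.sum_subset (Finset.subset_univ m.support)
          (fun x _ hx => Finsupp.notMem_support_iff.mp hx)).symm
      rw [← Nat.cast_sum, this, hm]
    rw [hs, mul_comm, ← smul_eq_mul, smul_monomial]
  calc ∑ j, X j * (pderiv j p : MvPolynomial (Fin n) ℝ)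
      = ∑ j, X j * pderiv j (∑ m ∈ p.support, monomial m (coeff m p)) := by rw [← p.as_sum]
    _ = ∑ m ∈ p.support, ∑ j, X j * (pderiv j (monomial m (coeff m p)) : MvPolynomial (Fin n) ℝ) := by
        simp_rw [map_sum, Finset.mul_sum]
        rw [Finset.sum_comm]
    _ = ∑ m ∈ p.support, (d : ℝ) • monomial m (coeff m p) := by
        refine Finset.sum_congr rfl fun m hm => key m _ ?_
        by_contra hne
        exact (MvPolynomial.mem_support_iff.mp hm) (hp.coeff_eq_zero hne)
    _ = (d : ℝ) • p := by rw [← Finset.smul_sum, ← p.as_sum]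

lemma finsupp_degree_one {σ : Type*} {m : σ →₀ ℕ} (hm : m.degree = 1) :
    ∃ j, m = Finsupp.single j 1 := by
  classical
  have hne : m ≠ 0 := by
    intro h; rw [h, map_zero] at hm; exact Nat.zero_ne_one hm
  obtain ⟨j, hj⟩ := Finsupp.ne_iff.mp hne
  rw [Finsupp.coe_zero, Pi.zero_apply] at hj
  have hj1 : m j = 1 := by
    have := Finsupp.le_degree j m
    omega
  refine ⟨j, ?_⟩
  ext l
  by_cases h : l = j
  · subst h; simp [hj1]
  · rw [Finsupp.single_eq_of_ne h]
    by_contra hl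
    have hjs : j ∈ m.support := Finsupp.mem_support_iff.mpr hj
    have hls : l ∈ m.support := Finsupp.mem_support_iff.mpr hl
    have hsub : ({j, l} : Finset σ) ⊆ m.support := by
      intro x hx
      rcases Finset.mem_insert.mp hx with h1 | h1
      · exact h1 ▸ hjs
      · exact (Finset.mem_singleton.mp h1) ▸ hls
    have : m j + m l ≤ m.degree := by
      rw [Finsupp.degree_apply]
      calc m j + m l = ∑ x ∈ ({j, l} : Finset σ), m x := by
            rw [Finset.sum_pair (Ne.symm h)]
        _ ≤ ∑ x ∈ m.support, m x := Finset.sum_le_sum_of_subset hsub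
    omega

lemma homog_one_eq {n : ℕ} {p : MvPolynomial (Fin n) ℝ} (hp : p.IsHomogeneous 1) :
    p = ∑ j, coeff (Finsupp.single j 1) p • X j := by
  classical
  apply MvPolynomial.ext
  intro m
  rw [coeff_sum]
  simp_rw [coeff_smul, coeff_X', smul_eq_mul, mul_ite, mul_one, mul_zero]
  by_cases hd : m.degree = 1
  · obtain ⟨j, rfl⟩ := finsupp_degree_one hd
    rw [Finset.sum_eq_single j]
    · rw [if_pos rfl]
    · intro b _ hb
      rw [if_neg (fun h => hb (Finsupp.single_left_inj one_ne_zero |>.mp h))]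
    · intro h; exact absurd (Finset.mem_univ j) h
  · rw [hp.coeff_eq_zero hd, Finset.sum_eq_zero]
    intro j _
    rw [if_neg]
    intro h
    apply hd
    rw [← h, Finsupp.degree_apply, Finsupp.support_single_ne_zero _ one_ne_zero,
      Finset.sum_singleton, Finsupp.single_eq_same]

lemma div_linear {n : ℕ} (A : Matrix (Fin n) (Fin n) ℝ) :
    ∑ i, (pderiv i (∑ j, A i j • X j) : MvPolynomial (Fin n) ℝ) = C (Matrix.trace A) := by
  classical
  have h : ∀ i : Fin n, (pderiv i (∑ j, A i j • X j) : MvPolynomial (Fin n) ℝ) = C (A i i) := by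
    intro i
    rw [map_sum]
    rw [Finset.sum_eq_single i]
    · rw [Derivation.map_smul, pderiv_X_self, smul_eq_C_mul, mul_one]
    · intro b _ hb
      rw [Derivation.map_smul, pderiv_X_of_ne hb, smul_zero]
    · intro h; exact absurd (Finset.mem_univ i) h
  simp_rw [h, ← map_sum]
  rfl

lemma span_bracket_eq (n k : ℕ) (hn : 2 ≤ n) :
    Submodule.span ℝ
        {η : Fin n → MvPolynomial (Fin n) ℝ |
          ∃ (v : Fin n → ℝ) (ξ : Fin n → MvPolynomial (Fin n) ℝ),
            (∀ i, (ξ i).IsHomogeneous (k + 2)) ∧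
            (∑ i, pderiv i (ξ i)) = 0 ∧
            η = fun i => ∑ j, v j • pderiv j (ξ i)}
      = Submodule.span ℝ
        {ξ : Fin n → MvPolynomial (Fin n) ℝ |
          (∀ i, (ξ i).IsHomogeneous (k + 1)) ∧ (∑ i, pderiv i (ξ i)) = 0} := by
  classical
  apply le_antisymm
  · rw [Submodule.span_le]
    rintro η ⟨v, ξ, hhom, hdiv, rfl⟩
    apply Submodule.subset_span
    refine ⟨fun i => ?_, ?_⟩
    · apply IsHomogeneous.sum
      intro j _
      rw [smul_eq_C_mul]
      exact (isHomogeneous_pderiv (hhom i) j).C_mul _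
    · calc ∑ i, (pderiv i (∑ j, v j • (pderiv j (ξ i) : MvPolynomial (Fin n) ℝ)) : MvPolynomial (Fin n) ℝ)
          = ∑ i, ∑ j, v j • (pderiv i ((pderiv j (ξ i) : MvPolynomial (Fin n) ℝ)) : MvPolynomial (Fin n) ℝ) := by
            simp_rw [map_sum, Derivation.map_smul]
        _ = ∑ j, v j • (pderiv j (∑ i, (pderiv i (ξ i) : MvPolynomial (Fin n) ℝ)) : MvPolynomial (Fin n) ℝ) := by
            rw [Finset.sum_comm]
            refine Finset.sum_congr rfl fun j _ => ?_
            rw [← Finset.smul_sum, map_sum]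
            congr 1
            exact Finset.sum_congr rfl fun i _ => pderiv_comm' j i (ξ i) |>.symm
        _ = 0 := by rw [hdiv]; simp
  · rw [Submodule.span_le]
    rintro ξ ⟨hhom, hdiv⟩
    set N : ℝ := (n : ℝ) + (k : ℝ) + 1 with hN
    have hN3 : (3 : ℝ) ≤ N := by
      have h2 : (2 : ℝ) ≤ (n : ℝ) := by exact_mod_cast hn
      have hk : (0 : ℝ) ≤ (k : ℝ) := Nat.cast_nonneg k
      rw [hN]; linarith
    have hNpos : (0 : ℝ) < N := by linarith
    set c : ℝ := N⁻¹ with hc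
    have hcN : c * N = 1 := inv_mul_cancel₀ (ne_of_gt hNpos)
    have hcpos : (0 : ℝ) < c := inv_pos.mpr hNpos
    set Ξ : Fin n → Fin n → MvPolynomial (Fin n) ℝ :=
      fun j i => X j * ξ i - c • (X i * ξ j) with hΞ
    have hΞhom : ∀ j i, (Ξ j i).IsHomogeneous (k + 2) := by
      intro j i
      have h12 : 1 + (k + 1) = k + 2 := by omega
      apply IsHomogeneous.sub
      · exact h12 ▸ (isHomogeneous_X ℝ j).mul (hhom i)
      · rw [smul_eq_C_mul]
        exact (h12 ▸ (isHomogeneous_X ℝ i).mul (hhom j)).C_mul _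
    have key1 : ∀ j : Fin n, ∑ i, (pderiv i (X j : MvPolynomial (Fin n) ℝ)) * ξ i = ξ j := by
      intro j
      rw [Finset.sum_eq_single j]
      · rw [pderiv_X_self, one_mul]
      · intro b _ hb
        rw [pderiv_X_of_ne (Ne.symm hb), zero_mul]
      · intro h; exact absurd (Finset.mem_univ j) h
    have hΞdiv : ∀ j, ∑ i, (pderiv i (Ξ j i) : MvPolynomial (Fin n) ℝ) = 0 := by
      intro j
      have e1 : ∑ i, (pderiv i (X j * ξ i) : MvPolynomial (Fin n) ℝ) = ξ j := by
        simp_rw [pderiv_mul]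
        rw [Finset.sum_add_distrib, key1 j, ← Finset.mul_sum, hdiv, mul_zero, add_zero]
      have e2 : ∑ i, (pderiv i (X i * ξ j) : MvPolynomial (Fin n) ℝ) = N • ξ j := by
        simp_rw [pderiv_mul, pderiv_X_self, one_mul]
        rw [Finset.sum_add_distrib, euler_identity (hhom j), Finset.sum_const,
          Finset.card_univ, Fintype.card_fin]
        rw [← Nat.cast_smul_eq_nsmul ℝ n (ξ j), ← add_smul, hN]
        push_cast
        ring_nf
      simp only [hΞ, map_sub, Derivation.map_smul]
      rw [Finset.sum_sub_distrib, e1, ← Finset.smul_sum, e2, smul_smul, hcN, one_smul, sub_self]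
    have key2 : ∀ i, ∑ j, (pderiv j (Ξ j i) : MvPolynomial (Fin n) ℝ) = (N - c) • ξ i := by
      intro i
      have e1 : ∑ j, (pderiv j (X j * ξ i) : MvPolynomial (Fin n) ℝ) = N • ξ i := by
        simp_rw [pderiv_mul, pderiv_X_self, one_mul]
        rw [Finset.sum_add_distrib, euler_identity (hhom i), Finset.sum_const,
          Finset.card_univ, Fintype.card_fin]
        rw [← Nat.cast_smul_eq_nsmul ℝ n (ξ i), ← add_smul, hN]
        push_cast
        ring_nf
      have e2 : ∑ j, (pderiv j (X i * ξ j) : MvPolynomial (Fin n) ℝ) = ξ i := by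
        simp_rw [pderiv_mul]
        rw [Finset.sum_add_distrib, key1 i, ← Finset.mul_sum, hdiv, mul_zero, add_zero]
      simp only [hΞ, map_sub, Derivation.map_smul]
      rw [Finset.sum_sub_distrib, e1, ← Finset.smul_sum, e2, sub_smul]
    have hNc : N - c ≠ 0 := by nlinarith
    have hξ : ξ = (N - c)⁻¹ • ∑ j : Fin n, (fun i => ∑ m, (Pi.single j 1 : Fin n → ℝ) m • (pderiv m (Ξ j i) : MvPolynomial (Fin n) ℝ)) := by
      funext i
      have hη : ∀ j, ∑ m, (Pi.single j 1 : Fin n → ℝ) m • (pderiv m (Ξ j i) : MvPolynomial (Fin n) ℝ)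
          = pderiv j (Ξ j i) := by
        intro j
        rw [Finset.sum_eq_single j]
        · rw [Pi.single_eq_same, one_smul]
        · intro b _ hb
          rw [Pi.single_eq_of_ne hb, zero_smul]
        · intro h; exact absurd (Finset.mem_univ j) h
      simp only [Pi.smul_apply, Finset.sum_apply]
      rw [Finset.sum_congr rfl fun j _ => hη j, key2 i, smul_smul,
        inv_mul_cancel₀ hNc, one_smul]
    rw [hξ]
    apply Submodule.smul_mem
    apply Submodule.sum_mem
    intro j _
    exact Submodule.subset_span ⟨Pi.single j 1, Ξ j, hΞhom j, hΞdiv j, rfl⟩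

/-- For `V = ℝ^n` (`n ≥ 2`) with prolongation spaces
`g_k' = Ker(q : S^{k+1}V* ⊗ V → S^k V*)` (homogeneous degree-`(k+1)` polynomial
vector fields with vanishing divergence), the bracket of `g_{-1} = V` (constant
vector fields, acting by directional derivative) with `g_{k+1}'` spans exactly
`g_k'` for all `k ≥ 0`; in particular `[g_{-1}, g_1'] = sl(V) ⊂ g_0` (traceless
linear vector fields). -/
theorem bracket_with_gminus1_surjective_on_divergence_free
    (n : ℕ) (hn : 2 ≤ n) (k : ℕ) :
    (Submodule.span ℝ
        {η : Fin n → MvPolynomial (Fin n) ℝ |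
          ∃ (v : Fin n → ℝ) (ξ : Fin n → MvPolynomial (Fin n) ℝ),
            (∀ i, (ξ i).IsHomogeneous (k + 2)) ∧
            (∑ i, pderiv i (ξ i)) = 0 ∧
            η = fun i => ∑ j, v j • pderiv j (ξ i)}
      = Submodule.span ℝ
        {ξ : Fin n → MvPolynomial (Fin n) ℝ |
          (∀ i, (ξ i).IsHomogeneous (k + 1)) ∧ (∑ i, pderiv i (ξ i)) = 0})
    ∧ (Submodule.span ℝ
        {η : Fin n → MvPolynomial (Fin n) ℝ |
          ∃ (v : Fin n → ℝ) (ξ : Fin n → MvPolynomial (Fin n) ℝ),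
            (∀ i, (ξ i).IsHomogeneous 2) ∧
            (∑ i, pderiv i (ξ i)) = 0 ∧
            η = fun i => ∑ j, v j • pderiv j (ξ i)}
      = Submodule.span ℝ
        {ξ : Fin n → MvPolynomial (Fin n) ℝ |
          ∃ A : Matrix (Fin n) (Fin n) ℝ,
            Matrix.trace A = 0 ∧ ξ = fun i => ∑ j, A i j • X j}) := by
  refine ⟨span_bracket_eq n k hn, ?_⟩
  have h0 := span_bracket_eq n 0 hn
  have hset : {ξ : Fin n → MvPolynomial (Fin n) ℝ |
        (∀ i, (ξ i).IsHomogeneous (0 + 1)) ∧ (∑ i, pderiv i (ξ i)) = 0}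
      = {ξ : Fin n → MvPolynomial (Fin n) ℝ |
          ∃ A : Matrix (Fin n) (Fin n) ℝ,
            Matrix.trace A = 0 ∧ ξ = fun i => ∑ j, A i j • X j} := by
    ext ξ
    constructor
    · rintro ⟨hhom, hdiv⟩
      set A : Matrix (Fin n) (Fin n) ℝ := fun i j => coeff (Finsupp.single j 1) (ξ i) with hA
      have hxi : ∀ i, ξ i = ∑ j, A i j • X j := fun i => homog_one_eq (hhom i)
      refine ⟨A, ?_, funext hxi⟩
      have h0' : C (Matrix.trace A) = (0 : MvPolynomial (Fin n) ℝ) := by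
        rw [← div_linear A]
        simp_rw [← hxi]
        exact hdiv
      exact C_injective (Fin n) ℝ (by rw [h0', map_zero])
    · rintro ⟨A, htr, rfl⟩
      constructor
      · intro i
        apply IsHomogeneous.sum
        intro j _
        rw [smul_eq_C_mul]
        exact (isHomogeneous_X ℝ j).C_mul _
      · rw [div_linear, htr, map_zero]
  rw [hset] at h0
  exact h0
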